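/- Suppose Φ is an orthogonal basis of ℂ^n such that φ_μ ∈ Φ for every character μ of H and the assignment μ ↦ φ_μ is injective; set Φ₀ = Φ \ {φ_μ : μ ∈ Ĥ}, and for a character χ of G let m⁺(χ) = #{μ ∈ Ĥ : μ ∘ θ = χ}. If h i ≤ 1 for all i ∈ Fin n (the semistable range), then for every character χ of G one has ∑_{φ ∈ Φ₀} |P_χ(φ)|² / ⟨φ, φ⟩ = ∑_i (w i)(h i) − m⁺(χ) · |G|²/m. (This is the semistable exact average formula of the paper's Corollary (cor:semistable), in the linear-algebra form in which it is proved.) -/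

import Mathlib

open Finset

noncomputable def Bform {n : ℕ} (w : Fin n → ℝ) (φ ψ : Fin n → ℂ) : ℂ :=
  ∑ i, ((w i : ℂ))⁻¹ * φ i * (starRingEnd ℂ) (ψ i)

noncomputable def Qform {n : ℕ} (w : Fin n → ℝ) (φ : Fin n → ℂ) : ℝ :=
  ∑ i, (w i)⁻¹ * ‖φ i‖ ^ 2

lemma Bform_self {n : ℕ} (w : Fin n → ℝ) (φ : Fin n → ℂ) :
    Bform w φ φ = (Qform w φ : ℂ) := by
  unfold Bform Qform
  push_cast
  refine Finset.sum_congr rfl fun i _ => ?_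
  rw [mul_assoc, Complex.mul_conj, ← Complex.sq_norm]
  push_cast
  ring

lemma Qform_pos {n : ℕ} (w : Fin n → ℝ) (hw : ∀ i, 0 < w i) (φ : Fin n → ℂ) (hφ : φ ≠ 0) :
    0 < Qform w φ := by
  obtain ⟨i, hi⟩ : ∃ i, φ i ≠ 0 := by
    by_contra h; push_neg at h; exact hφ (funext h)
  refine Finset.sum_pos' (fun j _ => ?_) ⟨i, Finset.mem_univ i, ?_⟩
  · have := (hw j); positivity
  · have : 0 < ‖φ i‖ := by simpa using hi
    have := hw i
    positivity

lemma Bform_sum_left {n : ℕ} (w : Fin n → ℝ) (s : Finset (Fin n → ℂ))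
    (c : (Fin n → ℂ) → ℂ) (ψ : Fin n → ℂ) :
    Bform w (∑ φ ∈ s, c φ • φ) ψ = ∑ φ ∈ s, c φ * Bform w φ ψ := by
  unfold Bform
  simp only [Finset.sum_apply, Pi.smul_apply, smul_eq_mul, Finset.mul_sum, Finset.sum_mul]
  rw [Finset.sum_comm]
  refine Finset.sum_congr rfl fun φ _ => ?_
  refine Finset.sum_congr rfl fun i _ => ?_
  ring

lemma Bform_sum_right {n : ℕ} (w : Fin n → ℝ) (s : Finset (Fin n → ℂ))
    (c : (Fin n → ℂ) → ℂ) (φ : Fin n → ℂ) :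
    Bform w φ (∑ ψ ∈ s, c ψ • ψ) = ∑ ψ ∈ s, (starRingEnd ℂ) (c ψ) * Bform w φ ψ := by
  unfold Bform
  simp only [Finset.sum_apply, Pi.smul_apply, smul_eq_mul, map_sum, map_mul,
    Finset.mul_sum, Finset.sum_mul]
  rw [Finset.sum_comm]
  refine Finset.sum_congr rfl fun ψ _ => ?_
  refine Finset.sum_congr rfl fun i _ => ?_
  ring

lemma parseval {n : ℕ} (w : Fin n → ℝ) (hw : ∀ i, 0 < w i) (Φ : Finset (Fin n → ℂ))
    (hΦ0 : ∀ φ ∈ Φ, φ ≠ 0)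
    (hΦorth : ∀ φ ∈ Φ, ∀ ψ ∈ Φ, φ ≠ ψ → Bform w φ ψ = 0)
    (hΦspan : Submodule.span ℂ (Φ : Set (Fin n → ℂ)) = ⊤) (ψ : Fin n → ℂ) :
    ∑ φ ∈ Φ, ‖Bform w φ ψ‖ ^ 2 / Qform w φ = Qform w ψ := by
  have hmem : ψ ∈ Submodule.span ℂ (Φ : Set (Fin n → ℂ)) := hΦspan ▸ Submodule.mem_top
  obtain ⟨c, -, hc⟩ := Submodule.mem_span_finset.mp hmem
  have key : ∀ φ₀ ∈ Φ, Bform w φ₀ ψ = (starRingEnd ℂ) (c φ₀) * (Qform w φ₀ : ℂ) := by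
    intro φ₀ h₀
    conv_lhs => rw [← hc]
    rw [Bform_sum_right, Finset.sum_eq_single φ₀]
    · rw [Bform_self]
    · intro ψ' hψ' hne
      rw [hΦorth φ₀ h₀ ψ' hψ' (Ne.symm hne), mul_zero]
    · intro h; exact absurd h₀ h
  have key2 : (Qform w ψ : ℂ) = ∑ φ ∈ Φ, c φ * (starRingEnd ℂ) (c φ) * (Qform w φ : ℂ) := by
    rw [← Bform_self, show Bform w ψ ψ = Bform w (∑ φ ∈ Φ, c φ • φ) ψ from by rw [hc],
      Bform_sum_left]
    refine Finset.sum_congr rfl fun φ hφ => ?_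
    rw [key φ hφ]; ring
  have hterm : ∀ φ₀ ∈ Φ, ‖Bform w φ₀ ψ‖ ^ 2 / Qform w φ₀
      = ‖c φ₀‖ ^ 2 * Qform w φ₀ := by
    intro φ₀ h₀
    have hQ := Qform_pos w hw φ₀ (hΦ0 φ₀ h₀)
    rw [key φ₀ h₀, norm_mul, Complex.norm_conj, Complex.norm_real, Real.norm_eq_abs, abs_of_pos hQ]
    field_simp
  rw [Finset.sum_congr rfl hterm]
  apply Complex.ofReal_injective
  rw [key2]
  push_cast
  refine Finset.sum_congr rfl fun φ _ => ?_
  rw [← Complex.ofReal_pow, Complex.sq_norm, ← Complex.mul_conj]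

lemma char_abs_one {G : Type*} [Group G] [Fintype G] (χ : G →* ℂˣ) (t : G) :
    ‖(χ t : ℂ)‖ = 1 := by
  have h1 : ((χ t : ℂ)) ^ Fintype.card G = 1 := by
    rw [← Units.val_pow_eq_pow_val, ← map_pow, pow_card_eq_one, map_one, Units.val_one]
  simpa [Complex.norm_def] using
    Complex.norm_eq_one_of_pow_eq_one h1 Fintype.card_ne_zero

lemma char_conj {G : Type*} [Group G] [Fintype G] (χ : G →* ℂˣ) (t : G) :
    (starRingEnd ℂ) ((χ t : ℂ)) = ((χ t : ℂ))⁻¹ := by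
  have h := char_abs_one χ t
  have h2 : ((χ t : ℂ)) * (starRingEnd ℂ) ((χ t : ℂ)) = 1 := by
    rw [Complex.mul_conj, ← Complex.sq_norm, h]
    norm_num
  field_simp at h2 ⊢
  linear_combination h2

lemma char_sum {G : Type*} [CommGroup G] [Fintype G] (ξ : G →* ℂˣ) :
    ∑ t : G, ((ξ t : ℂ)) = if ξ = 1 then (Fintype.card G : ℂ) else 0 := by
  split_ifs with h
  · subst h; simp [Finset.card_univ]
  · have hne : (Units.coeHom ℂ).comp ξ ≠ 1 := by
      intro hf
      apply h
      ext t
      have h2 := DFunLike.congr_fun hf t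
      simp only [MonoidHom.comp_apply, Units.coeHom_apply, MonoidHom.one_apply] at h2
      simpa using h2
    exact sum_hom_units_eq_zero ((Units.coeHom ℂ).comp ξ) hne



/- **Statement 7.** In the semistable range (`h i ≤ 1` for all `i`), for every character
`χ` of `G` one has
`∑_{φ ∈ Φ₀} |P_χ(φ)|²/⟨φ,φ⟩ = ∑_i (w i)(h i) − m⁺(χ) |G|² / m`,
where `Φ₀ = Φ \ {φ_μ : μ ∈ Ĥ}`, `m⁺(χ) = #{μ ∈ Ĥ : μ ∘ θ = χ}` and `m = ∑ (w i)⁻¹`. -/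
open scoped Classical in
theorem semistable_exact_period_average
    (n : ℕ) (hn : 1 ≤ n) (w : Fin n → ℝ) (hw : ∀ i, 0 < w i)
    (G : Type*) [CommGroup G] [Fintype G] [Fintype (G →* ℂˣ)]
    (H : Type*) [CommGroup H] [Fintype H] [Fintype (H →* ℂˣ)]
    (x : G → Fin n) (θ : G →* H) (ν : Fin n → H)
    (hν : ∀ t : G, ν (x t) = θ t)
    (Φ : Finset (Fin n → ℂ))
    (hΦ0 : ∀ φ ∈ Φ, φ ≠ 0)
    (hΦorth : ∀ φ ∈ Φ, ∀ ψ ∈ Φ, φ ≠ ψ →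
      ∑ i, ((w i : ℂ))⁻¹ * φ i * (starRingEnd ℂ) (ψ i) = 0)
    (hΦspan : Submodule.span ℂ (Φ : Set (Fin n → ℂ)) = ⊤)
    (hEis : ∀ μ : H →* ℂˣ, (fun i => ((μ (ν i) : ℂ))) ∈ Φ)
    (hinj : Function.Injective (fun (μ : H →* ℂˣ) => (fun i => ((μ (ν i) : ℂ)))))
    (hsemi : ∀ i, (Finset.univ.filter (fun t : G => x t = i)).card ≤ 1)
    (χ : G →* ℂˣ) :
    ∑ φ ∈ Φ.filter (fun φ => ∀ μ : H →* ℂˣ, φ ≠ fun i => ((μ (ν i) : ℂ))),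
        ‖∑ t : G, φ (x t) * ((χ t : ℂ))⁻¹‖ ^ 2 /
          (∑ i, (w i)⁻¹ * ‖φ i‖ ^ 2)
      = ∑ i, w i * ((Finset.univ.filter (fun t : G => x t = i)).card : ℝ)
          - ((Finset.univ.filter (fun μ : H →* ℂˣ => μ.comp θ = χ)).card : ℝ)
              * (Fintype.card G : ℝ) ^ 2 / (∑ i, (w i)⁻¹) := by
  classical
  set S : Fin n → ℂ := fun i => ∑ t ∈ Finset.univ.filter (fun t : G => x t = i), ((χ t : ℂ))
    with hS
  set ψ : Fin n → ℂ := fun i => (w i : ℂ) * S i with hψdef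
  -- the period is the inner product against ψ
  have hP : ∀ φ : Fin n → ℂ,
      (∑ t : G, φ (x t) * ((χ t : ℂ))⁻¹) = Bform w φ ψ := by
    intro φ
    rw [← Finset.sum_fiberwise_of_maps_to (g := x) (t := Finset.univ)
      (fun t _ => Finset.mem_univ (x t)) (fun t => φ (x t) * ((χ t : ℂ))⁻¹)]
    unfold Bform
    refine Finset.sum_congr rfl fun i _ => ?_
    have hwi : ((w i : ℂ)) ≠ 0 := by exact_mod_cast (hw i).ne'
    have h1 : ∑ t ∈ Finset.univ.filter (fun t : G => x t = i), φ (x t) * ((χ t : ℂ))⁻¹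
        = φ i * ∑ t ∈ Finset.univ.filter (fun t : G => x t = i), ((χ t : ℂ))⁻¹ := by
      rw [Finset.mul_sum]
      refine Finset.sum_congr rfl fun t ht => ?_
      rw [(Finset.mem_filter.mp ht).2]
    rw [h1, hψdef]
    simp only [map_mul, Complex.conj_ofReal, hS, map_sum]
    rw [Finset.sum_congr rfl fun t _ => char_conj χ t]
    field_simp
  -- the norm of ψ in the semistable range
  have hQψ : Qform w ψ
      = ∑ i, w i * ((Finset.univ.filter (fun t : G => x t = i)).card : ℝ) := by
    unfold Qform
    refine Finset.sum_congr rfl fun i _ => ?_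
    rcases Nat.le_one_iff_eq_zero_or_eq_one.mp (hsemi i) with h | h
    · rw [Finset.card_eq_zero] at h
      have hS0 : S i = 0 := by rw [hS]; simp [h]
      simp [hψdef, hS0, h]
    · obtain ⟨t, ht⟩ := Finset.card_eq_one.mp h
      have hS1 : S i = ((χ t : ℂ)) := by rw [hS]; simp [ht]
      have habs : ‖ψ i‖ = w i := by
        rw [hψdef]
        simp only [norm_mul, Complex.norm_real, Real.norm_eq_abs, hS1, char_abs_one χ t, mul_one]
        exact abs_of_pos (hw i)
      rw [habs, h]
      rw [sq]
      field_simp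
      norm_num
  -- total Parseval sum
  have htotal : ∑ φ ∈ Φ, ‖∑ t : G, φ (x t) * ((χ t : ℂ))⁻¹‖ ^ 2 /
        (∑ i, (w i)⁻¹ * ‖φ i‖ ^ 2)
      = ∑ i, w i * ((Finset.univ.filter (fun t : G => x t = i)).card : ℝ) := by
    rw [← hQψ, ← parseval w hw Φ hΦ0 hΦorth hΦspan ψ]
    refine Finset.sum_congr rfl fun φ _ => ?_
    rw [hP φ]
    rfl
  -- identify the complement with the image of the characters of H
  have himg : Φ.filter (fun φ => ¬ ∀ μ : H →* ℂˣ, φ ≠ fun i => ((μ (ν i) : ℂ)))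
      = Finset.image (fun (μ : H →* ℂˣ) => (fun i => ((μ (ν i) : ℂ)))) Finset.univ := by
    ext φ
    simp only [Finset.mem_filter, Finset.mem_image, Finset.mem_univ, true_and]
    constructor
    · rintro ⟨_, h⟩
      push_neg at h
      obtain ⟨μ, hμ⟩ := h
      exact ⟨μ, hμ.symm⟩
    · rintro ⟨μ, rfl⟩
      refine ⟨hEis μ, ?_⟩
      push_neg
      exact ⟨μ, rfl⟩
  -- the Eisenstein contribution
  have hEsum : ∑ φ ∈ Φ.filter (fun φ => ¬ ∀ μ : H →* ℂˣ, φ ≠ fun i => ((μ (ν i) : ℂ))),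
        ‖∑ t : G, φ (x t) * ((χ t : ℂ))⁻¹‖ ^ 2 /
          (∑ i, (w i)⁻¹ * ‖φ i‖ ^ 2)
      = ((Finset.univ.filter (fun μ : H →* ℂˣ => μ.comp θ = χ)).card : ℝ)
          * (Fintype.card G : ℝ) ^ 2 / (∑ i, (w i)⁻¹) := by
    rw [himg, Finset.sum_image (fun μ _ μ' _ h => hinj h)]
    have hterm : ∀ μ : H →* ℂˣ,
        ‖∑ t : G, ((μ (ν (x t)) : ℂ)) * ((χ t : ℂ))⁻¹‖ ^ 2 /
            (∑ i, (w i)⁻¹ * ‖(μ (ν i) : ℂ)‖ ^ 2)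
        = if μ.comp θ = χ then (Fintype.card G : ℝ) ^ 2 / (∑ i, (w i)⁻¹) else 0 := by
      intro μ
      have hnum : (∑ t : G, ((μ (ν (x t)) : ℂ)) * ((χ t : ℂ))⁻¹)
          = ∑ t : G, (((μ.comp θ * χ⁻¹) t : ℂ)) := by
        refine Finset.sum_congr rfl fun t _ => ?_
        rw [hν t]
        simp
      have hden : (∑ i, (w i)⁻¹ * ‖(μ (ν i) : ℂ)‖ ^ 2) = ∑ i, (w i)⁻¹ := by
        refine Finset.sum_congr rfl fun i _ => ?_
        rw [char_abs_one μ (ν i)]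
        ring
      rw [hnum, hden, char_sum (μ.comp θ * χ⁻¹)]
      have hiff : (μ.comp θ * χ⁻¹ = 1) ↔ μ.comp θ = χ := by
        constructor
        · intro h1
          ext t
          have h2 := DFunLike.congr_fun h1 t
          simp only [MonoidHom.mul_apply, MonoidHom.inv_apply, MonoidHom.one_apply] at h2
          exact congrArg Units.val (mul_inv_eq_one.mp h2)
        · intro h1
          ext t
          have h2 := DFunLike.congr_fun h1 t
          simp [MonoidHom.mul_apply, MonoidHom.inv_apply, h2]
      split_ifs with h1 h2 h2
      · simp
      · exact absurd (hiff.mp h1) h2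
      · exact absurd (hiff.mpr h2) h1
      · simp
    rw [Finset.sum_congr rfl fun μ _ => hterm μ, ← Finset.sum_filter, Finset.sum_const,
      nsmul_eq_mul]
    rw [mul_div_assoc]
  have hsplit := Finset.sum_filter_add_sum_filter_not Φ
    (fun φ => ∀ μ : H →* ℂˣ, φ ≠ fun i => ((μ (ν i) : ℂ)))
    (fun φ => ‖∑ t : G, φ (x t) * ((χ t : ℂ))⁻¹‖ ^ 2 /
      (∑ i, (w i)⁻¹ * ‖φ i‖ ^ 2))
  rw [htotal] at hsplit
  rw [← hsplit, hEsum]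
  ring
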